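/- The path metric construction preserves tensor products: for sets X, Y with reflexive symmetric relations ~_X, ~_Y, define the tensor relation on X × Y by (x,y) ~ (x',y') iff (x = x' and y ~_Y y') or (y = y' and x ~_X x'). Then the path metric of this tensor relation equals the sum metric d_X(x,x') + d_Y(y,y'), where d_X, d_Y are the path metrics of ~_X, ~_Y. -/

import Mathlib

open scoped ENNReal

/-- The path (pseudo-)metric induced by a relation. -/
noncomputable def pathDist {X : Type*} (r : X → X → Prop) (x y : X) : ℝ≥0∞ :=
  ⨅ (k : ℕ) (c : Fin (k + 1) → X) (_ : c 0 = x) (_ : c (Fin.last k) = y)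
    (_ : ∀ i : Fin k, r (c i.castSucc) (c i.succ)), (k : ℝ≥0∞)

lemma pathDist_le_chain {X : Type*} (r : X → X → Prop) {x y : X} (k : ℕ)
    (c : Fin (k + 1) → X) (h0 : c 0 = x) (hl : c (Fin.last k) = y)
    (hs : ∀ i : Fin k, r (c i.castSucc) (c i.succ)) :
    pathDist r x y ≤ (k : ℝ≥0∞) := by
  refine iInf_le_of_le k (iInf_le_of_le c ?_)
  exact iInf_le_of_le h0 (iInf_le_of_le hl (iInf_le _ hs))

lemma pathDist_self {X : Type*} (r : X → X → Prop) (x : X) : pathDist r x x = 0 := by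
  refine le_antisymm ?_ (zero_le)
  simpa using pathDist_le_chain r 0 (fun _ => x) rfl rfl (fun i => i.elim0)

lemma pathDist_cons {X : Type*} {r : X → X → Prop} {a b c : X} (h : r a b) :
    pathDist r a c ≤ 1 + pathDist r b c := by
  have key : ∀ (k : ℕ) (ch : Fin (k + 1) → X), ch 0 = b → ch (Fin.last k) = c →
      (∀ i : Fin k, r (ch i.castSucc) (ch i.succ)) → pathDist r a c ≤ 1 + (k : ℝ≥0∞) := by
    intro k ch h0 hl hs
    have := pathDist_le_chain r (x := a) (y := c) (k + 1) (Fin.cons a ch)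
      (by simp) (by rw [show Fin.last (k+1) = (Fin.last k).succ from rfl, Fin.cons_succ, hl])
      (by
        intro i
        induction i using Fin.cases with
        | zero => simpa [h0, Fin.castSucc_zero, Fin.cons_zero, Fin.succ_zero_eq_one] using h
        | succ j =>
            rw [← Fin.succ_castSucc]
            simpa using hs j)
    calc pathDist r a c ≤ ((k + 1 : ℕ) : ℝ≥0∞) := this
    _ = 1 + k := by push_cast; ring
  conv_rhs => rw [pathDist]
  simp only [ENNReal.add_iInf]
  exact le_iInf fun k => le_iInf fun ch => le_iInf fun h0 => le_iInf fun hl => le_iInf fun hs =>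
    key k ch h0 hl hs

lemma pathDist_triangle {X : Type*} (r : X → X → Prop) (a b c : X) :
    pathDist r a c ≤ pathDist r a b + pathDist r b c := by
  conv_rhs => rw [pathDist]
  simp only [ENNReal.iInf_add]
  refine le_iInf fun k => le_iInf fun ch => le_iInf fun h0 => le_iInf fun hl => le_iInf fun hs => ?_
  induction k generalizing a with
  | zero =>
      have : a = b := by rw [← h0, ← hl]; rfl
      simpa [this] using le_add_self
  | succ k ih =>
      have hab : r a (ch 1) := by
        have := hs 0
        simpa [h0, Fin.succ_zero_eq_one] using this
      have htail := ih (ch 1) (fun i => ch i.succ) rfl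
        (by show ch (Fin.last k).succ = b; rw [Fin.succ_last]; exact hl)
        (fun i => by show r (ch i.castSucc.succ) (ch i.succ.succ); rw [Fin.succ_castSucc]; exact hs i.succ)
      calc pathDist r a c ≤ 1 + pathDist r (ch 1) c := pathDist_cons hab
      _ ≤ 1 + ((k : ℝ≥0∞) + pathDist r b c) := by gcongr
      _ = ((k + 1 : ℕ) : ℝ≥0∞) + pathDist r b c := by push_cast; ring

/-- The path metric construction preserves tensor products: the path metric of
the tensor relation on `X × Y` is the sum of the path metrics. -/
theorem pathDist_tensor {X Y : Type*}
    (rX : X → X → Prop) (hreflX : Reflexive rX) (hsymmX : Symmetric rX)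
    (rY : Y → Y → Prop) (hreflY : Reflexive rY) (hsymmY : Symmetric rY)
    (p q : X × Y) :
    pathDist (fun a b => (a.1 = b.1 ∧ rY a.2 b.2) ∨ (a.2 = b.2 ∧ rX a.1 b.1)) p q =
      pathDist rX p.1 q.1 + pathDist rY p.2 q.2 := by
  set T : X × Y → X × Y → Prop :=
    fun a b => (a.1 = b.1 ∧ rY a.2 b.2) ∨ (a.2 = b.2 ∧ rX a.1 b.1) with hT
  refine le_antisymm ?_ ?_
  · -- upper bound: concatenate an X-chain and a Y-chain
    have hfst : ∀ (x x' : X) (y : Y), pathDist T (x, y) (x', y) ≤ pathDist rX x x' := by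
      intro x x' y
      conv_rhs => rw [pathDist]
      refine le_iInf fun k => le_iInf fun c => le_iInf fun h0 => le_iInf fun hl =>
        le_iInf fun hs => ?_
      exact pathDist_le_chain T k (fun i => (c i, y)) (by simp [h0]) (by simp [hl])
        (fun i => Or.inr ⟨rfl, hs i⟩)
    have hsnd : ∀ (x : X) (y y' : Y), pathDist T (x, y) (x, y') ≤ pathDist rY y y' := by
      intro x y y'
      conv_rhs => rw [pathDist]
      refine le_iInf fun k => le_iInf fun c => le_iInf fun h0 => le_iInf fun hl =>
        le_iInf fun hs => ?_
      exact pathDist_le_chain T k (fun i => (x, c i)) (by simp [h0]) (by simp [hl])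
        (fun i => Or.inl ⟨rfl, hs i⟩)
    calc pathDist T p q ≤ pathDist T p (q.1, p.2) + pathDist T (q.1, p.2) q :=
          pathDist_triangle T _ _ _
    _ ≤ pathDist rX p.1 q.1 + pathDist rY p.2 q.2 := by
        gcongr
        · exact hfst p.1 q.1 p.2
        · exact hsnd q.1 p.2 q.2
  · -- lower bound
    have key : ∀ (k : ℕ) (c : Fin (k + 1) → X × Y) (a : X × Y), c 0 = a →
        c (Fin.last k) = q → (∀ i : Fin k, T (c i.castSucc) (c i.succ)) →
        pathDist rX a.1 q.1 + pathDist rY a.2 q.2 ≤ (k : ℝ≥0∞) := by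
      intro k
      induction k with
      | zero =>
          intro c a h0 hl _
          have : a = q := by rw [← h0, ← hl]; rfl
          simp [this, pathDist_self]
      | succ k ih =>
          intro c a h0 hl hs
          have hstep0 : T a (c 1) := by
            have := hs 0
            simpa [h0, Fin.succ_zero_eq_one] using this
          have htail := ih (fun i => c i.succ) (c 1) rfl
            (by show c (Fin.last k).succ = q; rw [Fin.succ_last]; exact hl)
            (fun i => by
              show T (c i.castSucc.succ) (c i.succ.succ)
              rw [Fin.succ_castSucc]; exact hs i.succ)
          rcases hstep0 with ⟨h1, h2⟩ | ⟨h1, h2⟩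
          · calc pathDist rX a.1 q.1 + pathDist rY a.2 q.2
                ≤ pathDist rX (c 1).1 q.1 + (1 + pathDist rY (c 1).2 q.2) := by
                  rw [h1]; gcongr; exact pathDist_cons h2
            _ = 1 + (pathDist rX (c 1).1 q.1 + pathDist rY (c 1).2 q.2) := by ring
            _ ≤ 1 + (k : ℝ≥0∞) := by gcongr
            _ = ((k + 1 : ℕ) : ℝ≥0∞) := by push_cast; ring
          · calc pathDist rX a.1 q.1 + pathDist rY a.2 q.2
                ≤ (1 + pathDist rX (c 1).1 q.1) + pathDist rY (c 1).2 q.2 := by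
                  rw [h1]; gcongr; exact pathDist_cons h2
            _ = 1 + (pathDist rX (c 1).1 q.1 + pathDist rY (c 1).2 q.2) := by ring
            _ ≤ 1 + (k : ℝ≥0∞) := by gcongr
            _ = ((k + 1 : ℕ) : ℝ≥0∞) := by push_cast; ring
    conv_rhs => rw [pathDist]
    exact le_iInf fun k => le_iInf fun c => le_iInf fun h0 => le_iInf fun hl =>
      le_iInf fun hs => key k c p h0 hl hs
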